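/- Every element of the commutator subgroup of the k-fold iterated wreath product B_k of C_2 can be written as a single commutator [f, l] with f ∈ B_k and l ∈ G_k, where G_k is the index-2 subgroup {(g_1,g_2)π ∈ B_k : g_1g_2 ∈ G_{k-1}} (G_1 = {e}). -/

import Mathlib

/-- The cyclic shift action of `C_p = ZMod p` on the direct power `B^p`. -/
def cycShift (B : Type*) [Group B] (p : ℕ) :
    Multiplicative (ZMod p) →* MulAut (ZMod p → B) where
  toFun k := MulEquiv.arrowCongr (Equiv.addRight (Multiplicative.toAdd k)) (MulEquiv.refl B)
  map_one' := by
    ext f i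
    simp [MulEquiv.arrowCongr]
    rfl
  map_mul' a b := by
    ext f i
    simp only [MulEquiv.arrowCongr, Equiv.coe_addRight, MulEquiv.coe_mk, Equiv.coe_fn_mk,
      MulEquiv.refl_apply, toAdd_mul, MulAut.mul_apply]
    congr 1
    simp only [Equiv.addRight_symm, Equiv.coe_addRight]
    abel

/-- The permutational wreath product `B ≀ C_p` with `C_p` acting on `p` points by cyclic shift. -/
abbrev Wr (B : Type*) [Group B] (p : ℕ) : Type _ :=
  (ZMod p → B) ⋊[cycShift B p] Multiplicative (ZMod p)

/-- `BBgrp k` is the group `B_{k+1}`, the `(k+1)`-fold iterated wreath product of `C_2`: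
`BBgrp 0 = C_2` and `BBgrp (k+1) = BBgrp k ≀ C_2`.  It is (isomorphic to) a Sylow
2-subgroup of `S_{2^(k+1)}`. -/
def BBgrp : ℕ → GrpCat
  | 0 => GrpCat.of (Multiplicative (ZMod 2))
  | k + 1 => GrpCat.of (Wr (BBgrp k) 2)

/-- `GGset k` is the subset `G_{k+1}` of `B_{k+1} = BBgrp k`: `GGset 0 = {1}` and
`GGset (k+1) = {(g₁,g₂)π : g₁ * g₂ ∈ GGset k}`. -/
def GGset : (k : ℕ) → Set (BBgrp k)
  | 0 => {1}
  | k + 1 => {x : Wr (BBgrp k) 2 | x.left 0 * x.left 1 ∈ GGset k}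

open scoped commutatorElement

lemma cycShift_apply {B : Type*} [Group B] {p : ℕ} (s : Multiplicative (ZMod p))
    (f : ZMod p → B) (i : ZMod p) :
    cycShift B p s f i = f (i - Multiplicative.toAdd s) := by
  show f ((Equiv.addRight (Multiplicative.toAdd s)).symm i) = _
  simp [Equiv.addRight_symm, sub_eq_add_neg]

lemma cycShift_inv_apply {B : Type*} [Group B] {p : ℕ} (s : Multiplicative (ZMod p))
    (f : ZMod p → B) (i : ZMod p) :
    (cycShift B p s)⁻¹ f i = f (i + Multiplicative.toAdd s) := by
  show f ((Equiv.addRight (Multiplicative.toAdd s)) i) = _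
  simp

/-- The abelianized coordinate-sum homomorphism `B ≀ C₂ →* Bᵃᵇ`. -/
def absum (B : Type*) [Group B] : Wr B 2 →* Abelianization B where
  toFun x := Abelianization.of (x.left 0) * Abelianization.of (x.left 1)
  map_one' := by simp
  map_mul' x y := by
    simp only [SemidirectProduct.mul_left, Pi.mul_apply, cycShift_apply, map_mul]
    rcases (by decide : ∀ t : ZMod 2, t = 0 ∨ t = 1) (Multiplicative.toAdd x.right) with h | h <;>
      rw [h] <;> norm_num <;>
      simp [show (-1:ZMod 2)=1 from by decide, mul_comm, mul_left_comm, mul_assoc]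

set_option linter.unnecessarySeqFocus false in
lemma comm_formula {B : Type*} [Group B] (a b f0 l0 : B) (hc : a * b = ⁅f0, l0⁆) :
    (⟨fun i => if i = 0 then a else b, 1⟩ : Wr B 2) =
      ⁅(⟨fun i => if i = 0 then f0 else a⁻¹ * f0, 1⟩ : Wr B 2),
        (⟨fun i => if i = 0 then 1 else l0, Multiplicative.ofAdd 1⟩ : Wr B 2)⁆ := by
  apply SemidirectProduct.ext
  · funext i
    have hb : b = a⁻¹ * ⁅f0, l0⁆ := by rw [← hc]; group
    rcases (by decide : ∀ t : ZMod 2, t = 0 ∨ t = 1) i with h | h <;> subst h <;>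
      simp only [commutatorElement_def, SemidirectProduct.mul_left,
        SemidirectProduct.mul_right, SemidirectProduct.inv_left, SemidirectProduct.inv_right,
        cycShift_apply, cycShift_inv_apply, Pi.mul_apply, Pi.inv_apply,
        toAdd_ofAdd, toAdd_one, toAdd_mul, toAdd_inv, one_mul, mul_one, inv_one] <;>
      norm_num [show (0:ZMod 2)-1 = 1 from by decide, show (1:ZMod 2)-1 = 0 from by decide,
        hb, commutatorElement_def] <;>
      group
  · simp only [commutatorElement_def, SemidirectProduct.mul_right,
      SemidirectProduct.inv_right]
    decide

/-- every element of the commutator subgroup of `B_k` is a single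
commutator `⁅f, l⁆` with `f ∈ B_k` and `l ∈ G_k`
(indexing: `BBgrp k` is `B_{k+1}`, `GGset k` is `G_{k+1}`). -/
theorem commutator_BB_single_commutator (k : ℕ) :
    ∀ g ∈ commutator (BBgrp k), ∃ f l : BBgrp k, l ∈ GGset k ∧ g = ⁅f, l⁆ := by
  induction k with
  | zero =>
    intro g hg
    have h1 : g = 1 := by
      have h := Abelianization.commutator_subset_ker (MonoidHom.id (Multiplicative (ZMod 2))) hg
      simp only [MonoidHom.ker_id] at h
      exact h
    exact ⟨1, 1, rfl, by simp [h1]⟩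
  | succ k ih =>
    intro g hg
    have hg' : g ∈ commutator (Wr (BBgrp k) 2) := hg
    have hrt : g.right = 1 :=
      Abelianization.commutator_subset_ker SemidirectProduct.rightHom hg'
    have hab : g.left 0 * g.left 1 ∈ commutator (BBgrp k) := by
      have h2 : absum (BBgrp k) g = 1 :=
        Abelianization.commutator_subset_ker (absum (BBgrp k)) hg'
      have h3 : Abelianization.of (g.left 0 * g.left 1) = 1 := by
        rw [map_mul]; exact h2
      exact (QuotientGroup.eq_one_iff _).mp h3
    obtain ⟨f0, l0, hl0, hc⟩ := ih _ hab
    refine ⟨⟨fun i => if i = 0 then f0 else (g.left 0)⁻¹ * f0, 1⟩,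
            ⟨fun i => if i = 0 then 1 else l0, Multiplicative.ofAdd 1⟩, ?_, ?_⟩
    · show (if (0:ZMod 2) = 0 then (1:BBgrp k) else l0) *
        (if (1:ZMod 2) = 0 then (1:BBgrp k) else l0) ∈ GGset k
      simpa [show (1:ZMod 2) ≠ 0 from by decide] using hl0
    · have hgeq : g = (⟨fun i => if i = 0 then g.left 0 else g.left 1, 1⟩ :
          Wr (BBgrp k) 2) := by
        apply SemidirectProduct.ext
        · funext i
          rcases (by decide : ∀ t : ZMod 2, t = 0 ∨ t = 1) i with h | h <;> subst h <;>
            simp [show (1:ZMod 2) ≠ 0 from by decide]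
        · exact hrt
      exact hgeq.trans (comm_formula _ _ _ _ hc)
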